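/- Let p ≥ 5 be a prime. Then ∑_{k=0}^{p-1} C(2k,k)^2 / 16^k ≡ (-1)^{(p-1)/2} (mod p^2), where the left side is interpreted as a rational number whose denominator is coprime to p, and the Legendre symbol (-1/p) = (-1)^{(p-1)/2}. -/

import Mathlib

open Finset

private lemma rvh_odd_prod_fact (k : ℕ) :
    (2 * k).factorial = 2 ^ k * k.factorial * ∏ j ∈ range k, (2 * j + 1) := by
  induction k with
  | zero => simp
  | succ k ih =>
    have h2 : 2 * (k + 1) = (2 * k + 1) + 1 := by ring
    rw [h2, Nat.factorial_succ, Nat.factorial_succ, ih, prod_range_succ,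
      Nat.factorial_succ]
    ring

private lemma rvh_cterm_eq (k : ℕ) :
    ((Nat.choose (2 * k) k : ℚ) ^ 2 / 16 ^ k) * ((4 : ℚ) ^ k * (k.factorial : ℚ) ^ 2)
      = (((∏ j ∈ range k, (2 * j + 1) : ℕ)) : ℚ) ^ 2 := by
  have h1 : (2 * k).choose k * k.factorial * k.factorial = (2 * k).factorial := by
    have h := Nat.choose_mul_factorial_mul_factorial (show k ≤ 2 * k by omega)
    have h2 : 2 * k - k = k := by omega
    rw [h2] at h
    exact h
  have h3 : ((2 * k).choose k : ℚ) * k.factorial * k.factorial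
      = 2 ^ k * k.factorial * ((∏ j ∈ range k, (2 * j + 1) : ℕ) : ℚ) := by
    exact_mod_cast h1.trans (rvh_odd_prod_fact k)
  have hk0 : (k.factorial : ℚ) ≠ 0 := by
    exact_mod_cast k.factorial_ne_zero
  have hCk : ((2 * k).choose k : ℚ) * k.factorial
      = 2 ^ k * ((∏ j ∈ range k, (2 * j + 1) : ℕ) : ℚ) := by
    apply mul_right_cancel₀ hk0
    linear_combination h3
  have h16 : (16 : ℚ) ^ k ≠ 0 := by positivity
  rw [div_mul_eq_mul_div, div_eq_iff h16]
  have e16 : (16 : ℚ) ^ k = 2 ^ k * 2 ^ k * (2 ^ k * 2 ^ k) := by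
    rw [show (16 : ℚ) = 2 * 2 * (2 * 2) by norm_num, mul_pow, mul_pow]
  have e4 : (4 : ℚ) ^ k = 2 ^ k * 2 ^ k := by
    rw [show (4 : ℚ) = 2 * 2 by norm_num, mul_pow]
  rw [e16, e4]
  linear_combination ((((2 * k).choose k : ℚ)) * k.factorial
      + 2 ^ k * ((∏ j ∈ range k, (2 * j + 1) : ℕ) : ℚ)) * (2 ^ k * 2 ^ k) * hCk

private lemma rvh_key_rec (n k : ℕ) :
    ((k : ℤ) + 1) ^ 2 * (n.choose (k + 1)) * ((n + k + 1).choose (k + 1))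
      = ((n : ℤ) - k) * ((n : ℤ) + k + 1) * (n.choose k) * ((n + k).choose k) := by
  rcases lt_or_ge k n with h | h
  · have e1 : (n.choose (k + 1) : ℤ) * ((k : ℤ) + 1) = (n.choose k) * ((n : ℤ) - k) := by
      have h0 := Nat.choose_succ_right_eq n k
      zify [h.le] at h0
      linear_combination h0
    have e2 : ((n : ℤ) + k + 1) * ((n + k).choose k) = ((n + k + 1).choose (k + 1)) * ((k : ℤ) + 1) := by
      have h0 := Nat.add_one_mul_choose_eq (n + k) k
      zify at h0
      linear_combination h0
    linear_combination ((k : ℤ) + 1) * ((n + k + 1).choose (k + 1)) * e1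
      - ((n.choose k : ℤ)) * ((n : ℤ) - k) * e2
  · have h1 : n.choose (k + 1) = 0 := Nat.choose_eq_zero_of_lt (by omega)
    rcases eq_or_lt_of_le h with rfl | h'
    · simp [h1]
    · have h2 : n.choose k = 0 := Nat.choose_eq_zero_of_lt h'
      simp [h1, h2]

private lemma rvh_bterm_eq (n : ℕ) : ∀ k : ℕ,
    (4 : ℤ) ^ k * (k.factorial : ℤ) ^ 2 * ((-1) ^ k * n.choose k * (n + k).choose k)
      = ∏ j ∈ range k, ((2 * (j : ℤ) + 1) ^ 2 - (2 * (n : ℤ) + 1) ^ 2) := by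
  intro k
  induction k with
  | zero => simp
  | succ k ih =>
    rw [prod_range_succ, ← ih]
    have hkey := rvh_key_rec n k
    push_cast [Nat.factorial_succ]
    push_cast at hkey
    have harr : n + (k + 1) = n + k + 1 := by omega
    rw [harr]
    linear_combination ((-1 : ℤ)) ^ (k + 1) * 4 * 4 ^ k * ((k.factorial : ℤ)) ^ 2 * hkey

private lemma rvh_prod_sub_dvd (m : ℤ) (f : ℕ → ℤ) (k : ℕ) :
    m ∣ (∏ j ∈ range k, f j) - ∏ j ∈ range k, (f j - m) := by
  induction k with
  | zero => simp
  | succ k ih =>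
    obtain ⟨c, hc⟩ := ih
    exact ⟨f k * c + ∏ j ∈ range k, (f j - m), by
      rw [prod_range_succ, prod_range_succ]; linear_combination (f k) * hc⟩

private lemma rvh_inner_sum (n i : ℕ) (hi : i ≤ n) :
    ∑ k ∈ range (n + 1), (-1 : ℤ) ^ k * n.choose k * k.choose i
      = if i = n then (-1) ^ n else 0 := by
  have h0 : ∑ k ∈ range (n + 1), (-1 : ℤ) ^ k * n.choose k * k.choose i
      = ∑ k ∈ Ico i (n + 1), (-1 : ℤ) ^ k * n.choose k * k.choose i := by
    symm; apply sum_subset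
    · intro x hx; simp only [mem_Ico] at hx; simp only [mem_range]; omega
    · intro x hx hxn
      have hxi : x < i := by
        simp only [mem_range] at hx; simp only [mem_Ico] at hxn; omega
      simp [Nat.choose_eq_zero_of_lt hxi]
  rw [h0, sum_Ico_eq_sum_range]
  have h1 : ∀ j ∈ range (n + 1 - i), (-1 : ℤ) ^ (i + j) * n.choose (i + j) * (i + j).choose i
      = (-1) ^ i * (n.choose i) * ((-1) ^ j * (n - i).choose j) := by
    intro j hj
    simp only [mem_range] at hj
    have hij : i + j ≤ n := by omega
    have hh := Nat.choose_mul (n := n) (Nat.le_add_right i j)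
    simp only [Nat.add_sub_cancel_left] at hh
    have hZ : (n.choose (i + j) : ℤ) * ((i + j).choose i) = (n.choose i) * ((n - i).choose j) := by
      exact_mod_cast hh
    linear_combination ((-1 : ℤ) ^ i * (-1) ^ j) * hZ
  rw [sum_congr rfl h1, ← mul_sum]
  have hr : n + 1 - i = (n - i) + 1 := by omega
  rw [hr, Int.alternating_sum_range_choose]
  by_cases h : i = n
  · subst h; simp
  · have : n - i ≠ 0 := by omega
    simp [h, this]

private lemma rvh_central_identity (n : ℕ) :
    ∑ k ∈ range (n + 1), (-1 : ℤ) ^ k * n.choose k * (n + k).choose k = (-1) ^ n := by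
  have hV : ∀ k, k ≤ n → ((n + k).choose k : ℤ)
      = ∑ i ∈ range (n + 1), (n.choose i : ℤ) * k.choose i := by
    intro k hk
    have hv := Nat.add_choose_eq n k k
    rw [Finset.Nat.sum_antidiagonal_eq_sum_range_succ_mk] at hv
    have h2 : ∑ i ∈ range (k + 1), (n.choose i * k.choose (k - i)) =
        ∑ i ∈ range (k + 1), (n.choose i * k.choose i) := by
      apply sum_congr rfl
      intro i hi
      simp only [mem_range] at hi
      rw [Nat.choose_symm (by omega)]
    rw [h2] at hv
    have h3 : ∑ i ∈ range (k + 1), (n.choose i * k.choose i) =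
        ∑ i ∈ range (n + 1), (n.choose i * k.choose i) := by
      apply sum_subset
      · intro x hx; simp only [mem_range] at *; omega
      · intro x hx hxn
        have : k < x := by simp only [mem_range] at *; omega
        simp [Nat.choose_eq_zero_of_lt this]
    rw [h3] at hv
    exact_mod_cast hv
  calc ∑ k ∈ range (n + 1), (-1 : ℤ) ^ k * n.choose k * (n + k).choose k
      = ∑ k ∈ range (n + 1), ∑ i ∈ range (n + 1),
          (n.choose i : ℤ) * ((-1 : ℤ) ^ k * n.choose k * k.choose i) := by
        apply sum_congr rfl
        intro k hk
        simp only [mem_range] at hk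
        rw [hV k (by omega), mul_sum]
        apply sum_congr rfl
        intro i _
        ring
    _ = ∑ i ∈ range (n + 1), (n.choose i : ℤ) *
          ∑ k ∈ range (n + 1), ((-1 : ℤ) ^ k * n.choose k * k.choose i) := by
        rw [sum_comm]
        apply sum_congr rfl
        intro i _
        rw [mul_sum]
    _ = (-1) ^ n := by
        have hstep : ∀ i ∈ range (n + 1), (n.choose i : ℤ) *
            (∑ k ∈ range (n + 1), ((-1 : ℤ) ^ k * n.choose k * k.choose i))
            = if i = n then (-1 : ℤ) ^ n else 0 := by
          intro i hi
          simp only [mem_range] at hi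
          rw [rvh_inner_sum n i (by omega)]
          by_cases h : i = n
          · subst h; simp
          · simp [h]
        rw [sum_congr rfl hstep]
        simp

private lemma rvh_num_dvd_of (p : ℕ) (hp : p.Prime) (q : ℚ) (a b : ℤ)
    (hb : ¬ (p : ℤ) ∣ b) (h : q * (b : ℚ) = (p : ℚ) ^ 2 * (a : ℚ)) :
    ((p : ℤ)) ^ 2 ∣ q.num := by
  have hd : ((q.den : ℚ)) ≠ 0 := by
    exact_mod_cast q.den_nz
  have h2 : (q.num : ℚ) * b = (p : ℚ) ^ 2 * a * q.den := by
    rw [← Rat.num_div_den q] at h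
    field_simp at h
    linear_combination h
  have hZ : q.num * b = (p : ℤ) ^ 2 * a * q.den := by
    exact_mod_cast h2
  have hpp : Prime ((p : ℤ)) := Nat.prime_iff_prime_int.mp hp
  have hcop : IsCoprime ((p : ℤ) ^ 2) b :=
    IsCoprime.pow_left (hpp.coprime_iff_not_dvd.mpr hb)
  exact hcop.dvd_of_dvd_mul_right ⟨a * q.den, by linarith [hZ]⟩

theorem rv_half_supercongruence (p : ℕ) (hp : p.Prime) (hp5 : 5 ≤ p) :
    ((p : ℤ) ^ 2) ∣
      ((∑ k ∈ Finset.range p, (Nat.choose (2 * k) k : ℚ) ^ 2 / 16 ^ k)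
        - (-1 : ℚ) ^ ((p - 1) / 2)).num := by
  obtain ⟨n, hn⟩ := hp.odd_of_ne_two (by omega)
  have hhalf : (p - 1) / 2 = n := by omega
  have hpp : Prime ((p : ℤ)) := Nat.prime_iff_prime_int.mp hp
  set B : ℕ → ℤ := fun k => (-1) ^ k * n.choose k * (n + k).choose k with hB
  have hBsum : ∑ k ∈ range p, B k = (-1) ^ n := by
    rw [← rvh_central_identity n]
    symm
    apply sum_subset
    · intro x hx; simp only [mem_range] at *; omega
    · intro x hx hxn
      have hnx : n < x := by simp only [mem_range] at *; omega
      simp [hB, Nat.choose_eq_zero_of_lt hnx]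
  set q : ℚ := (∑ k ∈ Finset.range p, (Nat.choose (2 * k) k : ℚ) ^ 2 / 16 ^ k)
        - (-1 : ℚ) ^ ((p - 1) / 2) with hq
  have hq2 : q = ∑ k ∈ range p, ((Nat.choose (2 * k) k : ℚ) ^ 2 / 16 ^ k - ((B k : ℤ) : ℚ)) := by
    rw [sum_sub_distrib, hq, hhalf]
    congr 1
    have : (((∑ k ∈ range p, B k : ℤ)) : ℚ) = ∑ k ∈ range p, ((B k : ℤ) : ℚ) := by
      push_cast
      rfl
    rw [← this, hBsum]
    push_cast
    ring
  have hterm : ∀ k ∈ range p, ∃ a b : ℤ, ¬ (p : ℤ) ∣ b ∧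
      ((Nat.choose (2 * k) k : ℚ) ^ 2 / 16 ^ k - ((B k : ℤ) : ℚ)) * (b : ℚ)
        = (p : ℚ) ^ 2 * (a : ℚ) := by
    intro k hk
    simp only [mem_range] at hk
    obtain ⟨c, hc⟩ := rvh_prod_sub_dvd ((p : ℤ) ^ 2) (fun j => (2 * (j : ℤ) + 1) ^ 2) k
    refine ⟨c, ((4 ^ k * (k.factorial) ^ 2 : ℕ) : ℤ), ?_, ?_⟩
    · rw [Int.natCast_dvd_natCast]
      intro hdvd
      rcases (Nat.Prime.dvd_mul hp).mp hdvd with h | h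
      · have h4 : p ∣ 4 := hp.dvd_of_dvd_pow h
        have := Nat.le_of_dvd (by norm_num) h4
        omega
      · have hf : p ∣ k.factorial := hp.dvd_of_dvd_pow h
        have := (Nat.Prime.dvd_factorial hp).mp hf
        omega
    · have hA := rvh_cterm_eq k
      have hBq : ((B k : ℤ) : ℚ) * ((4 : ℚ) ^ k * (k.factorial : ℚ) ^ 2)
          = ∏ j ∈ range k, ((2 * (j : ℚ) + 1) ^ 2 - (p : ℚ) ^ 2) := by
        have h2 := rvh_bterm_eq n k
        have hpn : (2 * (n : ℤ) + 1) = (p : ℤ) := by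
          rw [hn]; push_cast; ring
        rw [hpn] at h2
        have hcast := congrArg (fun x : ℤ => (x : ℚ)) h2
        push_cast at hcast
        simp only [hB]
        push_cast
        linear_combination hcast
      have hcq : (∏ j ∈ range k, ((2 * (j : ℚ) + 1) ^ 2))
          - (∏ j ∈ range k, ((2 * (j : ℚ) + 1) ^ 2 - (p : ℚ) ^ 2)) = (p : ℚ) ^ 2 * c := by
        have := congrArg (fun x : ℤ => (x : ℚ)) hc
        push_cast at this
        linear_combination this
      have hAA : (∏ j ∈ range k, (2 * (j : ℚ) + 1)) ^ 2
          = ∏ j ∈ range k, ((2 * (j : ℚ) + 1) ^ 2) := by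
        rw [prod_pow]
      push_cast
      push_cast at hA hBq
      linear_combination hA - hBq + hAA + hcq
  have hsum : ∃ a b : ℤ, ¬ (p : ℤ) ∣ b ∧ q * (b : ℚ) = (p : ℚ) ^ 2 * (a : ℚ) := by
    rw [hq2]
    refine Finset.sum_induction _
      (fun r : ℚ => ∃ a b : ℤ, ¬ (p : ℤ) ∣ b ∧ r * (b : ℚ) = (p : ℚ) ^ 2 * (a : ℚ))
      ?_ ?_ hterm
    · rintro x y ⟨a1, b1, h1, e1⟩ ⟨a2, b2, h2, e2⟩
      refine ⟨a1 * b2 + a2 * b1, b1 * b2, ?_, ?_⟩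
      · intro hd
        rcases hpp.dvd_mul.mp hd with h | h
        · exact h1 h
        · exact h2 h
      · push_cast
        linear_combination (b2 : ℚ) * e1 + (b1 : ℚ) * e2
    · exact ⟨0, 1, by simpa using hpp.not_dvd_one, by simp⟩
  obtain ⟨a, b, hb, he⟩ := hsum
  exact rvh_num_dvd_of p hp q a b hb he
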